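/- Let A ∈ ℝ^{n×n} and B ∈ ℝ^{n×m} be such that the pair (A,B) is controllable, i.e., the controllability matrix [B, AB, …, A^{n−1}B] has rank n. Then there exists K ∈ ℝ^{m×n} such that every (complex) eigenvalue of A + BK has modulus strictly less than 1. Consequently, for any d ∈ ℝⁿ and any steady state (x̄, ū) with x̄ = Ax̄ + Bū + d, there exist c ≥ 1 and ε ∈ (0,1) such that, for every initial condition x₀ ∈ ℝⁿ, the closed-loop sequences u_k = ū + K(x_k − x̄) and x_{k+1} = A x_k + B u_k + d satisfy ‖x_k − x̄‖ + ‖u_k − ū‖ ≤ c ε^k ‖x₀ − x̄‖ for all k ≥ 0. -/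

import Mathlib

/-- The controllability matrix `[B, AB, …, A^{n-1}B]`, as a matrix indexed by
`Fin n × (Fin n × Fin m)` with block `(k, ·)` equal to `A^k B`. -/
noncomputable def ctrbMatrix {n m : ℕ} (A : Matrix (Fin n) (Fin n) ℝ)
    (B : Matrix (Fin n) (Fin m) ℝ) : Matrix (Fin n) (Fin n × Fin m) ℝ :=
  Matrix.of fun i p => (A ^ (p.1 : ℕ) * B) i p.2

/-- The successor state `x⁺ = A x + B u + d`. -/
def nextState {n m : ℕ} (A : Matrix (Fin n) (Fin n) ℝ) (B : Matrix (Fin n) (Fin m) ℝ)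
    (d : EuclideanSpace ℝ (Fin n)) (x : EuclideanSpace ℝ (Fin n))
    (u : EuclideanSpace ℝ (Fin m)) : EuclideanSpace ℝ (Fin n) :=
  WithLp.toLp 2 (fun i => (∑ j, A i j * x j) + (∑ j, B i j * u j) + d i)


open Module LinearMap

lemma deadbeat_aux (𝕜 : Type) [Field 𝕜] :
    ∀ (N : ℕ) (V U : Type) [AddCommGroup V] [Module 𝕜 V] [AddCommGroup U] [Module 𝕜 U]
      [FiniteDimensional 𝕜 V] (f : V →ₗ[𝕜] V) (g : U →ₗ[𝕜] V),
      Module.finrank 𝕜 V = N →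
      (⨆ k : ℕ, LinearMap.range ((f ^ k) ∘ₗ g)) = ⊤ →
      ∃ K : V →ₗ[𝕜] U, ((f + g ∘ₗ K) ^ N) = 0 := by
  intro N
  induction N using Nat.strong_induction_on with
  | _ N IH =>
    intro V U _ _ _ _ _ f g hN hc
    rcases Nat.eq_zero_or_pos N with hN0 | hNpos
    · subst hN0
      have hsub : Subsingleton V := Module.finrank_zero_iff.mp hN
      exact ⟨0, LinearMap.ext fun v => Subsingleton.elim _ _⟩
    · -- S := range g is nontrivial
      have hSne : LinearMap.range g ≠ ⊥ := by
        intro h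
        have hz : ∀ k : ℕ, LinearMap.range ((f ^ k) ∘ₗ g) = ⊥ := fun k => by
          rw [LinearMap.range_comp, h, Submodule.map_bot]
        have : (⊤ : Submodule 𝕜 V) = ⊥ := by
          rw [← hc]; simp [hz]
        have h0 : Module.finrank 𝕜 V = 0 := by
          rw [← finrank_top 𝕜 V, this, finrank_bot]
        omega
      set S := LinearMap.range g with hSdef
      obtain ⟨W, hW⟩ := S.exists_isCompl
      set Q : V →ₗ[𝕜] S := S.projectionOnto W hW with hQdef
      set P : V →ₗ[𝕜] W := W.projectionOnto S hW.symm with hPdef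
      have hQP : ∀ x : V, (Q x : V) + (P x : V) = x := fun x =>
        Submodule.projection_add_projection_eq_self hW x
      have hPS : ∀ s : V, s ∈ S → P s = 0 := fun s hs =>
        Submodule.projectionOnto_apply_of_mem_right hW.symm hs
      have hQS : ∀ s : S, Q (s : V) = s := fun s =>
        Submodule.linearProjOfIsCompl_apply_left hW s
      set fq : W →ₗ[𝕜] W := P ∘ₗ f ∘ₗ W.subtype with hfqdef
      set gq : S →ₗ[𝕜] W := P ∘ₗ f ∘ₗ S.subtype with hgqdef
      set R := (⨆ k : ℕ, LinearMap.range ((fq ^ k) ∘ₗ gq)) with hRdef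
      have hgqR : ∀ s : S, gq s ∈ R := fun s => by
        have : gq s ∈ LinearMap.range ((fq ^ 0) ∘ₗ gq) := by
          exact ⟨s, by simp⟩
        exact (le_iSup (fun k => LinearMap.range ((fq ^ k) ∘ₗ gq)) 0) this
      have hfqR : ∀ w ∈ R, fq w ∈ R := by
        intro w hw
        have hmap : Submodule.map fq R ≤ R := by
          rw [hRdef, Submodule.map_iSup]
          refine iSup_le fun k => ?_
          rw [← LinearMap.range_comp]
          have : fq ∘ₗ ((fq ^ k) ∘ₗ gq) = (fq ^ (k+1)) ∘ₗ gq := by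
            rw [← LinearMap.comp_assoc]; congr 1; exact (pow_succ' fq k).symm
          rw [this]
          exact le_iSup (fun k => LinearMap.range ((fq ^ k) ∘ₗ gq)) (k+1)
        exact hmap ⟨w, hw, rfl⟩
      have hPf : ∀ x : V, P (f x) = gq (Q x) + fq (P x) := by
        intro x
        conv_lhs => rw [← hQP x]
        simp [hfqdef, hgqdef, map_add]
      have key : ∀ x : V, P x ∈ R → P (f x) ∈ R := by
        intro x hx
        rw [hPf]
        exact add_mem (hgqR _) (hfqR _ hx)
      have hgen : ∀ (k : ℕ) (u : U), P ((f ^ k) (g u)) ∈ R := by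
        intro k
        induction k with
        | zero =>
          intro u
          have : P (g u) = 0 := hPS _ (LinearMap.mem_range_self g u)
          simp [this]
        | succ k ih =>
          intro u
          have : (f ^ (k+1)) (g u) = f ((f ^ k) (g u)) := by
            rw [pow_succ' f k]; rfl
          rw [this]
          exact key _ (ih u)
      have hRtop : R = ⊤ := by
        rw [eq_top_iff]
        rintro w -
        have hmem : ((w : V)) ∈ (⨆ k : ℕ, LinearMap.range ((f ^ k) ∘ₗ g)) := by
          rw [hc]; trivial
        have hle : (⨆ k : ℕ, LinearMap.range ((f ^ k) ∘ₗ g)) ≤ Submodule.comap P R := by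
          refine iSup_le fun k => ?_
          rintro x ⟨u, rfl⟩
          exact hgen k u
        have hPw : P (w : V) ∈ R := hle hmem
        rwa [Submodule.projectionOnto_apply_left hW.symm w] at hPw
      have hdim : finrank 𝕜 S + finrank 𝕜 W = N := by
        rw [Submodule.finrank_add_eq_of_isCompl hW, hN]
      have hSpos : finrank 𝕜 S ≠ 0 := fun h => hSne (Submodule.finrank_eq_zero.mp h)
      have hWlt : finrank 𝕜 W < N := by omega
      obtain ⟨Kq, hKq⟩ := IH (finrank 𝕜 W) hWlt W S fq gq rfl hRtop
      -- right inverse of g onto S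
      obtain ⟨h, hh⟩ := g.rangeRestrict.exists_rightInverse_of_surjective
        (LinearMap.range_rangeRestrict g)
      have hgh : ∀ s : S, g (h s) = (s : V) := by
        intro s
        have := congrArg (fun φ => φ s) hh
        simp only [LinearMap.comp_apply, LinearMap.id_apply] at this
        calc g (h s) = ((g.rangeRestrict (h s) : S) : V) := rfl
        _ = (s : V) := by rw [this]
      set Φ : V →ₗ[𝕜] S := Kq ∘ₗ P ∘ₗ f with hΦdef
      set K : V →ₗ[𝕜] U := h ∘ₗ (Φ - Q ∘ₗ f) with hKdef
      set M := f + g ∘ₗ K with hMdef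
      have hMx : ∀ x, M x = f x + g (K x) := fun x => rfl
      have hgK : ∀ x, g (K x) = ((Φ x : V) - (Q (f x) : V)) := by
        intro x
        calc g (K x) = g (h ((Φ - Q ∘ₗ f) x)) := rfl
        _ = (((Φ - Q ∘ₗ f) x : S) : V) := hgh _
        _ = ((Φ x : V) - (Q (f x) : V)) := by
            rw [LinearMap.sub_apply]; rfl
      have hQM : ∀ x, Q (M x) = Kq (P (f x)) := by
        intro x
        rw [hMx, hgK, map_add]
        have h1 : Q ((Φ x : V) - (Q (f x) : V)) = Φ x - Q (f x) := by
          rw [map_sub, hQS, hQS]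
        rw [h1]
        simp [hΦdef]
      have hPM : ∀ x, P (M x) = P (f x) := by
        intro x
        rw [hMx, map_add, hPS (g (K x)) (LinearMap.mem_range_self g _), add_zero]
      set Nq := fq + gq ∘ₗ Kq with hNqdef
      have hstep : ∀ x, Q x = Kq (P x) → P (M x) = Nq (P x) := by
        intro x hx
        rw [hPM, hPf, hx]
        simp [hNqdef, add_comm]
      have hQMP : ∀ x, Q (M x) = Kq (P (M x)) := by
        intro x; rw [hQM, hPM]
      have hiter : ∀ (j : ℕ) (x : V), P ((M ^ (j+1)) x) = (Nq ^ j) (P (M x)) := by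
        intro j
        induction j with
        | zero => intro x; simp [pow_one]
        | succ j ih =>
          intro x
          have h1 : (M ^ (j+1+1)) x = M ((M ^ (j+1)) x) := by rw [pow_succ' M (j+1)]; rfl
          have h2 : (M ^ (j+1)) x = M ((M ^ j) x) := by rw [pow_succ' M j]; rfl
          have h3 : Q ((M ^ (j+1)) x) = Kq (P ((M ^ (j+1)) x)) := by
            rw [h2]; exact hQMP _
          rw [h1, hstep _ h3, ih x, ← Module.End.mul_apply, ← pow_succ' Nq j]
      set nW := finrank 𝕜 W with hnWdef
      have hzero : ∀ x, (M ^ (nW + 1)) x = 0 := by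
        intro x
        have hP : P ((M ^ (nW+1)) x) = 0 := by
          rw [hiter nW x, hKq]; rfl
        have hQ : Q ((M ^ (nW+1)) x) = 0 := by
          have h2 : (M ^ (nW+1)) x = M ((M ^ nW) x) := by rw [pow_succ' M nW]; rfl
          rw [h2, hQMP, ← h2, hP, map_zero]
        have := hQP ((M ^ (nW+1)) x)
        rw [hP, hQ] at this
        simpa using this.symm
      refine ⟨K, ?_⟩
      have hpow : M ^ N = M ^ (N - (nW+1)) * M ^ (nW + 1) := by
        rw [← pow_add]; congr 1; omega
      ext x
      rw [hpow, Module.End.mul_apply, hzero x, map_zero]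
      rfl

lemma mulVecLin_pow {n : ℕ} (A : Matrix (Fin n) (Fin n) ℝ) (k : ℕ) :
    (A ^ k).mulVecLin = (A.mulVecLin) ^ k := by
  induction k with
  | zero => rw [pow_zero, pow_zero, Matrix.mulVecLin_one]; rfl
  | succ k ih =>
    rw [pow_succ, pow_succ, Matrix.mulVecLin_mul, ih]
    rfl

lemma nilpotent_matrix {n m : ℕ} (A : Matrix (Fin n) (Fin n) ℝ) (B : Matrix (Fin n) (Fin m) ℝ)
    (hctrb : (ctrbMatrix A B).rank = n) :
    ∃ K : Matrix (Fin m) (Fin n) ℝ, (A + B * K) ^ n = 0 := by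
  classical
  set f := A.mulVecLin with hf
  set g := B.mulVecLin with hg
  have h1 : LinearMap.range (ctrbMatrix A B).mulVecLin = ⊤ := by
    apply Submodule.eq_top_of_finrank_eq
    rw [Module.finrank_fin_fun]
    exact hctrb
  have hsup : (⨆ k : ℕ, LinearMap.range ((f ^ k) ∘ₗ g)) = ⊤ := by
    rw [eq_top_iff, ← h1]
    rintro _ ⟨v, rfl⟩
    have hsum : (ctrbMatrix A B).mulVecLin v
        = ∑ k : Fin n, ((A ^ (k : ℕ) * B).mulVec fun j => v (k, j)) := by
      ext i
      rw [Finset.sum_apply]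
      simp [Matrix.mulVecLin_apply, Matrix.mulVec, dotProduct, ctrbMatrix,
        Fintype.sum_prod_type]
    rw [hsum]
    refine Submodule.sum_mem _ fun k _ => ?_
    refine (le_iSup (fun k : ℕ => LinearMap.range ((f ^ k) ∘ₗ g)) (k : ℕ)) ?_
    refine ⟨fun j => v (k, j), ?_⟩
    have h2 : ((f ^ (k : ℕ)) ∘ₗ g) = (A ^ (k : ℕ) * B).mulVecLin := by
      rw [Matrix.mulVecLin_mul, mulVecLin_pow]
    rw [h2]
    rfl
  obtain ⟨Kl, hKl⟩ := deadbeat_aux ℝ n (Fin n → ℝ) (Fin m → ℝ) f g (Module.finrank_fin_fun ℝ) hsup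
  refine ⟨LinearMap.toMatrix' Kl, ?_⟩
  have hKlm : (LinearMap.toMatrix' Kl).mulVecLin = Kl := by
    rw [← Matrix.toLin'_apply']
    exact Matrix.toLin'_toMatrix' Kl
  have hconv : (A + B * LinearMap.toMatrix' Kl).mulVecLin = f + g ∘ₗ Kl := by
    rw [Matrix.mulVecLin_add, Matrix.mulVecLin_mul, hKlm, hf, hg]
  have h2 : ((A + B * LinearMap.toMatrix' Kl) ^ n).mulVecLin = (0 : Matrix (Fin n) (Fin n) ℝ).mulVecLin := by
    rw [mulVecLin_pow, hconv, hKl, Matrix.mulVecLin_zero]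
  exact Matrix.toLin'.injective h2

/-- spectrum of nilpotent: all eigenvalues are 0 -/
lemma spec_nilpotent {n : ℕ} (M : Matrix (Fin n) (Fin n) ℂ) (hM : IsNilpotent M)
    (μ : ℂ) (hμ : μ ∈ spectrum ℂ M) : μ = 0 := by
  by_contra hμ0
  apply spectrum.mem_iff.mp hμ
  have hx : IsNilpotent ((μ⁻¹ : ℂ) • M) := hM.smul _
  have h1 : IsUnit (1 - (μ⁻¹ : ℂ) • M) := hx.isUnit_one_sub
  have h2 : IsUnit (algebraMap ℂ (Matrix (Fin n) (Fin n) ℂ) μ) :=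
    (isUnit_iff_ne_zero.mpr hμ0).map (algebraMap ℂ (Matrix (Fin n) (Fin n) ℂ))
  have h3 : algebraMap ℂ (Matrix (Fin n) (Fin n) ℂ) μ - M
      = algebraMap ℂ (Matrix (Fin n) (Fin n) ℂ) μ * (1 - (μ⁻¹ : ℂ) • M) := by
    rw [mul_sub, mul_one, Algebra.algebraMap_eq_smul_one, smul_mul_assoc, one_mul,
      smul_smul, mul_inv_cancel₀ hμ0, one_smul]
  rw [h3]
  exact h2.mul h1

/-- If `(A, B)` is controllable then there is a feedback gain `K` placing
all (complex) eigenvalues of `A + BK` strictly inside the unit disc, and consequently any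
steady state `(x̄, ū)` of `x⁺ = Ax + Bu + d` is exponentially reached by the closed loop
`u_k = ū + K (x_k - x̄)` from any initial condition. -/
theorem controllable_implies_stabilizable_and_exponentially_reachable
    {n m : ℕ} (A : Matrix (Fin n) (Fin n) ℝ) (B : Matrix (Fin n) (Fin m) ℝ)
    (hctrb : (ctrbMatrix A B).rank = n) :
    ∃ K : Matrix (Fin m) (Fin n) ℝ,
      (∀ μ ∈ spectrum ℂ ((A + B * K).map Complex.ofReal), ‖μ‖ < 1) ∧
      ∀ (d xbar : EuclideanSpace ℝ (Fin n)) (ubar : EuclideanSpace ℝ (Fin m)),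
        xbar = nextState A B d xbar ubar →
        ∃ c : ℝ, 1 ≤ c ∧ ∃ ε ∈ Set.Ioo (0 : ℝ) 1,
          ∀ (x0 : EuclideanSpace ℝ (Fin n)) (x : ℕ → EuclideanSpace ℝ (Fin n))
            (u : ℕ → EuclideanSpace ℝ (Fin m)),
            x 0 = x0 →
            (∀ k, u k = (WithLp.toLp 2 (fun j => ubar j + ∑ i, K j i * (x k i - xbar i)) :
              EuclideanSpace ℝ (Fin m))) →
            (∀ k, x (k + 1) = nextState A B d (x k) (u k)) →
            ∀ k, ‖x k - xbar‖ + ‖u k - ubar‖ ≤ c * ε ^ k * ‖x0 - xbar‖ := by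
  classical
  obtain ⟨K, hK⟩ := nilpotent_matrix A B hctrb
  set M := A + B * K with hMdef
  refine ⟨K, ?_, ?_⟩
  · intro μ hμ
    have hMc : ((M.map Complex.ofReal)) ^ n = 0 := by
      have h0 : M.map Complex.ofReal = Complex.ofRealHom.mapMatrix M := rfl
      rw [h0, ← map_pow, hK, map_zero]
    have hμ0 := spec_nilpotent _ ⟨n, hMc⟩ μ hμ
    rw [hμ0]; norm_num
  · intro d xbar ubar hss
    let TM : ℕ → (EuclideanSpace ℝ (Fin n) →L[ℝ] EuclideanSpace ℝ (Fin n)) :=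
      fun k => LinearMap.toContinuousLinearMap (Matrix.toEuclideanLin (M ^ k))
    let TK : EuclideanSpace ℝ (Fin n) →L[ℝ] EuclideanSpace ℝ (Fin m) :=
      LinearMap.toContinuousLinearMap (Matrix.toEuclideanLin K)
    set cK := ‖TK‖ with hcKdef
    set Cs := (∑ k ∈ Finset.range n, ‖TM k‖) + 1 with hCsdef
    have hcK0 : 0 ≤ cK := norm_nonneg _
    have hCs1 : 1 ≤ Cs := le_add_of_nonneg_left (Finset.sum_nonneg fun _ _ => norm_nonneg _)
    have h2n : (1:ℝ) ≤ 2 ^ n := one_le_pow₀ (by norm_num)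
    have hc1 : (1:ℝ) ≤ (1 + cK) * Cs * 2 ^ n := by
      have ha : (1:ℝ) ≤ (1 + cK) * Cs := by nlinarith
      nlinarith
    refine ⟨(1 + cK) * Cs * 2 ^ n, hc1, 1/2, ⟨by norm_num, by norm_num⟩, ?_⟩
    intro x0 x u hx0 hu hdyn
    subst hx0
    have hTMCs : ∀ j, j < n → ‖TM j‖ ≤ Cs := by
      intro j hj
      rw [hCsdef]
      refine le_trans ?_ (le_add_of_nonneg_right zero_le_one)
      exact Finset.single_le_sum (f := fun j => ‖TM j‖)
        (fun _ _ => norm_nonneg _) (Finset.mem_range.mpr hj)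
    -- closed-loop error dynamics
    have hux : ∀ k, (fun j => u k j - ubar j) = K.mulVec (fun i => x k i - xbar i) := by
      intro k
      funext j
      rw [hu k]
      simp [Matrix.mulVec, dotProduct]
    have hxx : ∀ k, (fun i => x (k+1) i - xbar i)
        = A.mulVec (fun j => x k j - xbar j) + B.mulVec (fun j => u k j - ubar j) := by
      intro k
      funext i
      have h1 : x (k+1) i = (∑ j, A i j * x k j) + (∑ j, B i j * u k j) + d i := by
        rw [hdyn k]; rfl
      have h2 : xbar i = (∑ j, A i j * xbar j) + (∑ j, B i j * ubar j) + d i := by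
        conv_lhs => rw [hss]
        rfl
      simp only [Pi.add_apply, Matrix.mulVec, dotProduct, h1, h2, mul_sub,
        Finset.sum_sub_distrib]
      ring
    have he : ∀ k, (fun i => x k i - xbar i) = (M ^ k).mulVec (fun i => x 0 i - xbar i) := by
      intro k
      induction k with
      | zero => rw [pow_zero, Matrix.one_mulVec]
      | succ k ih =>
        rw [hxx k, hux k, Matrix.mulVec_mulVec, ← Matrix.add_mulVec, ← hMdef, ih,
          Matrix.mulVec_mulVec, ← pow_succ']
    -- translate to Euclidean norms
    have hxke : ∀ k : ℕ, x k - xbar = TM k (x 0 - xbar) := by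
      intro k
      ext i
      show x k i - xbar i = (M ^ k).mulVec (fun j => x 0 j - xbar j) i
      exact congrFun (he k) i
    have huke : ∀ k : ℕ, u k - ubar = TK (x k - xbar) := by
      intro k
      ext j
      show u k j - ubar j = K.mulVec (fun i => x k i - xbar i) j
      exact congrFun (hux k) j
    intro k
    have hub : ‖u k - ubar‖ ≤ cK * ‖x k - xbar‖ := by
      rw [huke k, hcKdef]; exact TK.le_opNorm _
    have hxkb : ‖x k - xbar‖ ≤ ‖TM k‖ * ‖x 0 - xbar‖ := by
      rw [hxke k]; exact (TM k).le_opNorm _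
    clear_value cK Cs
    rcases lt_or_ge k n with hk | hk
    · -- k < n
      have hxb : ‖x k - xbar‖ ≤ Cs * ‖x 0 - xbar‖ :=
        le_trans hxkb (mul_le_mul_of_nonneg_right (hTMCs k hk) (norm_nonneg _))
      have h1le : (1:ℝ) ≤ 2 ^ n * (1/2) ^ k := by
        have hpk : ((1:ℝ)/2) ^ k = ((2:ℝ) ^ k)⁻¹ := by rw [one_div, inv_pow]
        have hkn : (2:ℝ) ^ k ≤ 2 ^ n := pow_le_pow_right₀ (by norm_num) hk.le
        rw [hpk]
        calc (1:ℝ) = 2 ^ k * ((2:ℝ) ^ k)⁻¹ := by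
              rw [mul_inv_cancel₀ (by positivity)]
          _ ≤ 2 ^ n * ((2:ℝ) ^ k)⁻¹ :=
              mul_le_mul_of_nonneg_right hkn (by positivity)
      calc ‖x k - xbar‖ + ‖u k - ubar‖
          ≤ (1 + cK) * Cs * ‖x 0 - xbar‖ := by
            nlinarith [mul_le_mul_of_nonneg_left hxb hcK0, norm_nonneg (x k - xbar)]
        _ = ((1 + cK) * Cs * ‖x 0 - xbar‖) * 1 := by ring
        _ ≤ ((1 + cK) * Cs * ‖x 0 - xbar‖) * (2 ^ n * (1/2) ^ k) := by
            refine mul_le_mul_of_nonneg_left h1le ?_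
            have h4 : (0:ℝ) ≤ 1 + cK := by linarith
            positivity
        _ = (1 + cK) * Cs * 2 ^ n * (1/2) ^ k * ‖x 0 - xbar‖ := by ring
    · -- n ≤ k
      have hMk : M ^ k = 0 := by
        have h5 : M ^ k = M ^ (k - n) * M ^ n := by rw [← pow_add]; congr 1; omega
        rw [h5, hK, mul_zero]
      have hx0' : x k - xbar = 0 := by
        rw [hxke k]
        have h6 : Matrix.toEuclideanLin (M ^ k) = 0 := by rw [hMk, map_zero]
        show Matrix.toEuclideanLin (M ^ k) (x 0 - xbar) = 0
        rw [h6]; rfl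
      have hu0 : u k - ubar = 0 := by rw [huke k, hx0', map_zero]
      rw [hx0', hu0]
      simp only [norm_zero, add_zero]
      have hc0 : (0:ℝ) ≤ (1 + cK) * Cs := by nlinarith
      positivity
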